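/- arXiv:1005.3178 — 3 statements merged into one kernel-verified Lean document; each statement's English description precedes it below -/
import Mathlib

section
/- Let K be a poset. (i) For every inclusion o ≤ a the map λ_{ao}([p]_w) := [(ao) * p * (ao)‾]_w is a well-defined group isomorphism λ_{ao} : Λ_o → Λ_a satisfying λ_{ao} ∘ λ_{oe} = λ_{ae} for e ≤ o ≤ a, so (Λ,λ)_K is a net bundle of discrete groups; moreover λ_{ao} maps Λ^l_o injectively into Λ^l_a, so (Λ^l,λ)_K is a net of discrete groups, and the inclusion maps i_o : Λ^l_o → Λ_o satisfy λ_{ao} ∘ i_o = i_a ∘ λ_{ao}, i.e. they constitute a monomorphism of nets of groups. (ii) If a group G acts on K by order-preserving bijections, then g_*([p]_w) := [gp]_w defines group isomorphisms g_* : Λ_o → Λ_{go} and g_* : Λ^l_o → Λ^l_{go} satisfying g_* ∘ λ_{ao} = λ_{ga,go} ∘ g_* for o ≤ a and g_* ∘ i_o = i_{go} ∘ g_*, so i is a monomorphism of G-covariant nets of groups. -/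
noncomputable section

universe u v w u' v' w'

namespace AQFT

/-! ### Simplices and paths in a poset -/

structure Simplex1 (K : Type u) [PartialOrder K] : Type u where
  supp : K
  d0 : K
  d1 : K
  le0 : d0 ≤ supp
  le1 : d1 ≤ supp

namespace Simplex1

variable {K : Type u} [PartialOrder K]

def op (s : Simplex1 K) : Simplex1 K := ⟨s.supp, s.d1, s.d0, s.le1, s.le0⟩

def deg (a : K) : Simplex1 K := ⟨a, a, a, le_rfl, le_rfl⟩

def map {L : Type u'} [PartialOrder L] (f : K →o L) (s : Simplex1 K) : Simplex1 L :=
  ⟨f s.supp, f s.d0, f s.d1, f.monotone s.le0, f.monotone s.le1⟩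

end Simplex1

structure Simplex2 (K : Type u) [PartialOrder K] : Type u where
  supp : K
  d0 : Simplex1 K
  d1 : Simplex1 K
  d2 : Simplex1 K
  le0 : d0.supp ≤ supp
  le1 : d1.supp ≤ supp
  le2 : d2.supp ≤ supp
  h00 : d0.d0 = d1.d0
  h11 : d1.d1 = d2.d1
  h10 : d0.d1 = d2.d0

inductive SPath (K : Type u) [PartialOrder K] : K → K → Type u
  | nil (a : K) : SPath K a a
  | cons {a b c : K} (p : SPath K a b) (s : Simplex1 K) (h1 : s.d1 = b) (h0 : s.d0 = c) :
      SPath K a c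

namespace SPath

variable {K : Type u} [PartialOrder K]

/-- The path consisting of a single 1-simplex. -/
def single {a b : K} (s : Simplex1 K) (h1 : s.d1 = a) (h0 : s.d0 = b) : SPath K a b :=
  .cons (.nil a) s h1 h0

/-- Composition of paths: first traverse `p`, then `q`. -/
def comp {a b : K} (p : SPath K a b) : {c : K} → SPath K b c → SPath K a c
  | _, .nil _ => p
  | _, .cons q s h1 h0 => .cons (p.comp q) s h1 h0

/-- The opposite (reverse) of a path. -/
def reverse {a : K} : {b : K} → SPath K a b → SPath K b a
  | _, .nil _ => .nil a
  | _, .cons p s h1 h0 => (single s.op h0 h1).comp p.reverse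

@[simp] theorem comp_nil {a b : K} (p : SPath K a b) : p.comp (.nil b) = p := rfl

@[simp] theorem nil_comp {a b : K} (p : SPath K a b) : (SPath.nil a).comp p = p := by
  induction p with
  | nil => rfl
  | cons p s h1 h0 ih =>
      show SPath.cons ((SPath.nil _).comp p) s h1 h0 = _
      rw [ih]

theorem comp_assoc {a b c d : K} (p : SPath K a b) (q : SPath K b c) (r : SPath K c d) :
    (p.comp q).comp r = p.comp (q.comp r) := by
  induction r with
  | nil => rfl
  | cons r s h1 h0 ih =>
      show SPath.cons ((p.comp q).comp r) s h1 h0 = SPath.cons (p.comp (q.comp r)) s h1 h0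
      rw [ih]

/-- All 1-simplices of the path have support `≤ o`. -/
def SuppLE (o : K) {a : K} : {b : K} → SPath K a b → Prop
  | _, .nil _ => True
  | _, .cons p s _ _ => SuppLE o p ∧ s.supp ≤ o

/-- All supports and faces of the path belong to `P`. -/
def MemAll (P : Set K) {a : K} : {b : K} → SPath K a b → Prop
  | _, .nil _ => True
  | _, .cons p s _ _ => MemAll P p ∧ s.supp ∈ P ∧ s.d0 ∈ P ∧ s.d1 ∈ P

theorem SuppLE.comp {o : K} {a b c : K} {p : SPath K a b} {q : SPath K b c}
    (hp : SuppLE o p) (hq : SuppLE o q) : SuppLE o (p.comp q) := by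
  induction q with
  | nil => exact hp
  | cons q s h1 h0 ih => exact ⟨ih hq.1, hq.2⟩

theorem SuppLE.reverse {o : K} {a b : K} {p : SPath K a b} (hp : SuppLE o p) :
    SuppLE o p.reverse := by
  induction p with
  | nil => trivial
  | cons p s h1 h0 ih => exact SuppLE.comp ⟨trivial, hp.2⟩ (ih hp.1)

/-- Mapping paths along a monotone map. -/
def map {L : Type u'} [PartialOrder L] (f : K →o L) {a : K} :
    {b : K} → SPath K a b → SPath L (f a) (f b)
  | _, .nil _ => .nil (f a)
  | _, .cons p s h1 h0 => .cons (map f p) (s.map f) (congrArg f h1) (congrArg f h0)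

/-- The path of the nerve 1-simplex associated with an inclusion `o ≤ a`. -/
def nervePath {o a : K} (h : o ≤ a) : SPath K o a :=
  single ⟨a, a, o, le_rfl, h⟩ rfl rfl


/-! ### w-equivalence of paths -/

inductive WEquiv : {a b : K} → SPath K a b → SPath K a b → Prop
  | refl {a b : K} (p : SPath K a b) : WEquiv p p
  | symm {a b : K} {p q : SPath K a b} : WEquiv p q → WEquiv q p
  | trans {a b : K} {p q r : SPath K a b} : WEquiv p q → WEquiv q r → WEquiv p r
  | comp_congr {a b c : K} {p p' : SPath K a b} {q q' : SPath K b c} :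
      WEquiv p p' → WEquiv q q' → WEquiv (p.comp q) (p'.comp q')
  /- move (1): inserting a degenerate 1-simplex -/
  | degen {a : K} (s : Simplex1 K) (h0 : s.d0 = a) (h1 : s.d1 = a) (hs : s.supp = a) :
      WEquiv (SPath.nil a) (single s h1 h0)
  /- move (2): a 2-simplex all of whose faces are 1-simplices of the nerve -/
  | nerveTri {a b : K} (c : Simplex2 K) (hn0 : c.d0.d0 = c.d0.supp)
      (hn1 : c.d1.d0 = c.d1.supp) (hn2 : c.d2.d0 = c.d2.supp)
      (h1 : c.d2.d1 = a) (h0 : c.d0.d0 = b) :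
      WEquiv ((single c.d2 h1 rfl).comp (single c.d0 c.h10 h0))
        (single c.d1 (c.h11.trans h1) (c.h00.symm.trans h0))
  /- move (3): replacing `b̄ * b` by the degenerate 1-simplex at `∂₁ b` -/
  | cancel {a b : K} (s : Simplex1 K) (h1 : s.d1 = a) (h0 : s.d0 = b) :
      WEquiv ((single s h1 h0).comp (single s.op h0 h1)) (single (Simplex1.deg a) rfl rfl)

theorem w_single_comp_op {a b : K} (s : Simplex1 K) (h1 : s.d1 = a) (h0 : s.d0 = b) :
    WEquiv ((single s h1 h0).comp (single s.op h0 h1)) (SPath.nil a) :=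
  (WEquiv.cancel s h1 h0).trans (WEquiv.degen (Simplex1.deg a) rfl rfl rfl).symm

theorem w_comp_reverse_self {a b : K} (p : SPath K a b) :
    WEquiv (p.comp p.reverse) (SPath.nil a) := by
  induction p with
  | nil => exact .refl _
  | cons p s h1 h0 ih =>
      show WEquiv ((p.comp (single s h1 h0)).comp ((single s.op h0 h1).comp p.reverse)) _
      rw [comp_assoc, ← comp_assoc (single s h1 h0)]
      have h2 : WEquiv (((single s h1 h0).comp (single s.op h0 h1)).comp p.reverse)
          p.reverse := by
        have h3 := WEquiv.comp_congr (w_single_comp_op s h1 h0) (WEquiv.refl p.reverse)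
        rwa [nil_comp] at h3
      exact (WEquiv.comp_congr (WEquiv.refl p) h2).trans ih

theorem w_reverse_comp_self {a b : K} (p : SPath K a b) :
    WEquiv (p.reverse.comp p) (SPath.nil b) := by
  induction p with
  | nil => exact .refl _
  | cons p s h1 h0 ih =>
      show WEquiv (((single s.op h0 h1).comp p.reverse).comp (p.comp (single s h1 h0))) _
      rw [comp_assoc, ← comp_assoc p.reverse]
      have h2 : WEquiv ((p.reverse.comp p).comp (single s h1 h0)) (single s h1 h0) := by
        have h3 := WEquiv.comp_congr ih (WEquiv.refl (single s h1 h0))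
        rwa [nil_comp] at h3
      have h4 : WEquiv ((single s.op h0 h1).comp ((p.reverse.comp p).comp (single s h1 h0)))
          ((single s.op h0 h1).comp (single s h1 h0)) :=
        WEquiv.comp_congr (WEquiv.refl _) h2
      exact h4.trans (w_single_comp_op s.op h0 h1)

theorem WEquiv.reverse_congr {a b : K} {p q : SPath K a b} (h : WEquiv p q) :
    WEquiv p.reverse q.reverse := by
  have e1 : WEquiv p.reverse (p.reverse.comp (q.comp q.reverse)) :=
    WEquiv.comp_congr (WEquiv.refl p.reverse) (w_comp_reverse_self q).symm
  have e2 : WEquiv (p.reverse.comp (q.comp q.reverse)) ((p.reverse.comp p).comp q.reverse) := by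
    rw [comp_assoc]
    exact WEquiv.comp_congr (WEquiv.refl _)
      (WEquiv.comp_congr h.symm (WEquiv.refl _))
  have e3 : WEquiv ((p.reverse.comp p).comp q.reverse) q.reverse := by
    have h3 := WEquiv.comp_congr (w_reverse_comp_self p) (WEquiv.refl q.reverse)
    rwa [nil_comp] at h3
  exact (e1.trans e2).trans e3

end SPath

/-! ### The w-groups of loops -/

instance wSetoid (K : Type u) [PartialOrder K] (o : K) : Setoid (SPath K o o) where
  r := SPath.WEquiv
  iseqv := ⟨fun p => .refl p, fun h => h.symm, fun h h' => h.trans h'⟩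

/-- The w-group of loops `Λ_o` over `o`. -/
def WLoop (K : Type u) [PartialOrder K] (o : K) : Type u := Quotient (wSetoid K o)

namespace WLoop

variable {K : Type u} [PartialOrder K] {o : K}

def mk (p : SPath K o o) : WLoop K o := Quotient.mk _ p

instance : One (WLoop K o) := ⟨mk (SPath.nil o)⟩

instance : Mul (WLoop K o) :=
  ⟨Quotient.map₂ (fun p q => q.comp p)
    (fun _ _ hp _ _ hq => SPath.WEquiv.comp_congr hq hp)⟩

instance : Inv (WLoop K o) :=
  ⟨Quotient.map SPath.reverse (fun _ _ h => h.reverse_congr)⟩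

instance : Group (WLoop K o) where
  mul_assoc x y z := by
    refine Quotient.inductionOn₃ x y z ?_
    intro p q r
    show mk (r.comp (q.comp p)) = mk ((r.comp q).comp p)
    rw [SPath.comp_assoc]
  one_mul x := Quotient.inductionOn x fun p => rfl
  mul_one x := Quotient.inductionOn x fun p => congrArg mk (SPath.nil_comp p)
  inv_mul_cancel x := Quotient.inductionOn x fun p => Quotient.sound (SPath.w_comp_reverse_self p)

end WLoop

/-- The w-group `Λ^l_o` of loops supported in `o`, as a subgroup of `Λ_o`. -/
def WLoopLoc (K : Type u) [PartialOrder K] (o : K) : Subgroup (WLoop K o) where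
  carrier := {x | ∃ p : SPath K o o, SPath.SuppLE o p ∧ WLoop.mk p = x}
  one_mem' := ⟨SPath.nil o, trivial, rfl⟩
  mul_mem' := by
    rintro x y ⟨p, hp, rfl⟩ ⟨q, hq, rfl⟩
    exact ⟨q.comp p, SPath.SuppLE.comp hq hp, rfl⟩
  inv_mem' := by
    rintro x ⟨p, hp, rfl⟩
    exact ⟨p.reverse, SPath.SuppLE.reverse hp, rfl⟩

/-- The order-preserving map on the poset given by the action of `g ∈ G`. -/
def smulOrderHom {K : Type u} [PartialOrder K] {G : Type v} [Group G] [MulAction G K]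
    (hord : ∀ (g : G) (a b : K), a ≤ b → g • a ≤ g • b) (g : G) : K →o K :=
  ⟨fun x => g • x, fun _ _ h => hord g _ _ h⟩

/-! ### Auxiliary material for statement_0 -/

namespace SPath

variable {K : Type u} [PartialOrder K]

theorem reverse_comp {a b c : K} (p : SPath K a b) (q : SPath K b c) :
    (p.comp q).reverse = q.reverse.comp p.reverse := by
  induction q with
  | nil => simp [reverse]
  | cons q s h1 h0 ih =>
      show (single s.op h0 h1).comp (p.comp q).reverse
        = ((single s.op h0 h1).comp q.reverse).comp p.reverse
      rw [ih, comp_assoc]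

theorem map_comp {L : Type u} [PartialOrder L] (f : K →o L) {a b c : K}
    (p : SPath K a b) (q : SPath K b c) :
    map f (p.comp q) = (map f p).comp (map f q) := by
  induction q with
  | nil => rfl
  | cons q s h1 h0 ih =>
      show SPath.cons (map f (p.comp q)) _ _ _ = _
      rw [ih]; rfl

theorem map_reverse {L : Type u} [PartialOrder L] (f : K →o L) {a b : K}
    (p : SPath K a b) : map f p.reverse = (map f p).reverse := by
  induction p with
  | nil => rfl
  | cons p s h1 h0 ih =>
      show map f ((single s.op h0 h1).comp p.reverse) = _
      rw [map_comp, ih]; rfl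

/-- Cast of a path along equalities of endpoints. -/
def castP {a b a' b' : K} (ha : a = a') (hb : b = b') (p : SPath K a b) : SPath K a' b' :=
  ha ▸ hb ▸ p

theorem castP_castP {a b a' b' a'' b'' : K} (ha : a = a') (hb : b = b')
    (ha' : a' = a'') (hb' : b' = b'') (p : SPath K a b) :
    castP ha' hb' (castP ha hb p) = castP (ha.trans ha') (hb.trans hb') p := by
  subst ha; subst hb; subst ha'; subst hb'; rfl

theorem castP_self {a b : K} (ha : a = a) (hb : b = b) (p : SPath K a b) :
    castP ha hb p = p := rfl

theorem wequiv_castP {a b a' b' : K} (ha : a = a') (hb : b = b')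
    {p q : SPath K a b} (h : WEquiv p q) : WEquiv (castP ha hb p) (castP ha hb q) := by
  subst ha; subst hb; exact h

theorem map_castP {L : Type u} [PartialOrder L] (f : K →o L) {a b a' b' : K}
    (ha : a = a') (hb : b = b') (p : SPath K a b) :
    map f (castP ha hb p) = castP (congrArg f ha) (congrArg f hb) (map f p) := by
  subst ha; subst hb; rfl

theorem castP_nil {a a' : K} (h : a = a') : castP h h (SPath.nil a) = SPath.nil a' := by
  subst h; rfl

theorem cons_eq {a b c : K} {p p' : SPath K a b} {s s' : Simplex1 K}
    (hp : p = p') (hs : s = s') {h1 : s.d1 = b} {h0 : s.d0 = c}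
    {h1' : s'.d1 = b} {h0' : s'.d0 = c} :
    SPath.cons p s h1 h0 = SPath.cons p' s' h1' h0' := by
  subst hp; subst hs; rfl

theorem castP_cons {a b c a' b' c' : K} (ea : a = a') (eb : b = b') (ec : c = c')
    (p : SPath K a b) (s : Simplex1 K) (h1 : s.d1 = b) (h0 : s.d0 = c) :
    castP ea ec (SPath.cons p s h1 h0)
      = SPath.cons (castP ea eb p) s (h1.trans eb) (h0.trans ec) := by
  subst ea; subst eb; subst ec; rfl

theorem simplex1_map_map (f f' : K →o K) (hf : ∀ x, f' (f x) = x) (s : Simplex1 K) :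
    (s.map f).map f' = s := by
  cases s
  simp [Simplex1.map, hf]

theorem map_map_inv (f f' : K →o K) (hf : ∀ x, f' (f x) = x) {a b : K} (p : SPath K a b) :
    map f' (map f p) = castP (hf a).symm (hf b).symm p := by
  induction p with
  | nil => rw [castP_nil]; rfl
  | cons p s h1 h0 ih =>
      rw [castP_cons (hf a).symm (hf _).symm (hf _).symm]
      exact cons_eq ih (simplex1_map_map f f' hf s)

def _root_.AQFT.Simplex2.map {L : Type u} [PartialOrder L] (f : K →o L)
    (c : Simplex2 K) : Simplex2 L :=
  ⟨f c.supp, c.d0.map f, c.d1.map f, c.d2.map f,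
   f.monotone c.le0, f.monotone c.le1, f.monotone c.le2,
   congrArg f c.h00, congrArg f c.h11, congrArg f c.h10⟩

theorem WEquiv.map {L : Type u} [PartialOrder L] (f : K →o L) {a b : K}
    {p q : SPath K a b} (h : WEquiv p q) : WEquiv (SPath.map f p) (SPath.map f q) := by
  induction h with
  | refl p => exact .refl _
  | symm _ ih => exact ih.symm
  | trans _ _ ih1 ih2 => exact ih1.trans ih2
  | comp_congr _ _ ih1 ih2 => rw [map_comp, map_comp]; exact .comp_congr ih1 ih2
  | degen s h0 h1 hs =>
      exact .degen (s.map f) (congrArg f h0) (congrArg f h1) (congrArg f hs)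
  | nerveTri c hn0 hn1 hn2 h1 h0 =>
      rw [map_comp]
      exact .nerveTri (c.map f) (congrArg f hn0) (congrArg f hn1) (congrArg f hn2)
        (congrArg f h1) (congrArg f h0)
  | cancel s h1 h0 =>
      rw [map_comp]
      exact .cancel (s.map f) (congrArg f h1) (congrArg f h0)

theorem SuppLE.mono {o o' a b : K} (h : o ≤ o') {p : SPath K a b}
    (hp : SuppLE o p) : SuppLE o' p := by
  induction p with
  | nil => trivial
  | cons p s h1 h0 ih => exact ⟨ih hp.1, hp.2.trans h⟩

theorem SuppLE.map (f : K →o K) {o a b : K} {p : SPath K a b}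
    (hp : SuppLE o p) : SuppLE (f o) (map f p) := by
  induction p with
  | nil => trivial
  | cons p s h1 h0 ih => exact ⟨ih hp.1, f.monotone hp.2⟩

/-! ### Conjugation by a path -/

/-- Conjugation of a loop at `o` by a path `t : o → a`. -/
def conj {o a : K} (t : SPath K o a) (p : SPath K o o) : SPath K a a :=
  t.reverse.comp (p.comp t)

theorem conj_congr {o a : K} (t : SPath K o a) {p q : SPath K o o}
    (h : WEquiv p q) : WEquiv (conj t p) (conj t q) :=
  WEquiv.comp_congr (WEquiv.refl _) (WEquiv.comp_congr h (WEquiv.refl _))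

theorem conj_congr_t {o a : K} {t t' : SPath K o a} (h : WEquiv t t') (p : SPath K o o) :
    WEquiv (conj t p) (conj t' p) :=
  WEquiv.comp_congr h.reverse_congr (WEquiv.comp_congr (WEquiv.refl p) h)

theorem conj_conj {o a b : K} (t : SPath K o a) (u : SPath K a b) (p : SPath K o o) :
    conj u (conj t p) = conj (t.comp u) p := by
  show u.reverse.comp ((t.reverse.comp (p.comp t)).comp u)
    = (t.comp u).reverse.comp (p.comp (t.comp u))
  rw [reverse_comp, comp_assoc t.reverse, comp_assoc u.reverse, ← comp_assoc p t u]

theorem conj_left_inv {o a : K} (t : SPath K o a) (p : SPath K o o) :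
    WEquiv (t.comp ((conj t p).comp t.reverse)) p := by
  show WEquiv (t.comp ((t.reverse.comp (p.comp t)).comp t.reverse)) p
  rw [comp_assoc t.reverse, ← comp_assoc t t.reverse]
  have h1 : WEquiv ((t.comp t.reverse).comp ((p.comp t).comp t.reverse))
      ((p.comp t).comp t.reverse) := by
    have := WEquiv.comp_congr (w_comp_reverse_self t)
      (WEquiv.refl ((p.comp t).comp t.reverse))
    rwa [nil_comp] at this
  refine h1.trans ?_
  rw [comp_assoc p t t.reverse]
  have := WEquiv.comp_congr (WEquiv.refl p) (w_comp_reverse_self t)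
  rwa [comp_nil] at this

theorem conj_right_inv {o a : K} (t : SPath K o a) (q : SPath K a a) :
    WEquiv (conj t (t.comp (q.comp t.reverse))) q := by
  show WEquiv (t.reverse.comp ((t.comp (q.comp t.reverse)).comp t)) q
  rw [comp_assoc t, ← comp_assoc t.reverse t]
  have h1 : WEquiv ((t.reverse.comp t).comp ((q.comp t.reverse).comp t))
      ((q.comp t.reverse).comp t) := by
    have := WEquiv.comp_congr (w_reverse_comp_self t)
      (WEquiv.refl ((q.comp t.reverse).comp t))
    rwa [nil_comp] at this
  refine h1.trans ?_
  rw [comp_assoc q t.reverse t]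
  have := WEquiv.comp_congr (WEquiv.refl q) (w_reverse_comp_self t)
  rwa [comp_nil] at this

theorem conj_mul {o a : K} (t : SPath K o a) (p q : SPath K o o) :
    WEquiv (conj t (q.comp p)) ((conj t q).comp (conj t p)) := by
  show WEquiv (t.reverse.comp ((q.comp p).comp t))
    ((t.reverse.comp (q.comp t)).comp (t.reverse.comp (p.comp t)))
  rw [comp_assoc t.reverse (q.comp t), comp_assoc q t, ← comp_assoc t t.reverse (p.comp t)]
  refine WEquiv.comp_congr (WEquiv.refl t.reverse) ?_
  rw [comp_assoc q p t]
  refine WEquiv.comp_congr (WEquiv.refl q) ?_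
  have := WEquiv.comp_congr (w_comp_reverse_self t) (WEquiv.refl (p.comp t))
  rw [nil_comp] at this
  exact this.symm

theorem nerve_comp {e o a : K} (h1 : e ≤ o) (h2 : o ≤ a) :
    WEquiv ((nervePath h1).comp (nervePath h2)) (nervePath (h1.trans h2)) :=
  WEquiv.nerveTri
    ⟨a, ⟨a, a, o, le_rfl, h2⟩, ⟨a, a, e, le_rfl, h1.trans h2⟩, ⟨o, o, e, le_rfl, h1⟩,
      le_rfl, le_rfl, h2, rfl, rfl, rfl⟩ rfl rfl rfl rfl rfl

theorem suppLE_nervePath {o a : K} (h : o ≤ a) : SuppLE a (nervePath h) :=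
  ⟨trivial, le_rfl⟩

theorem map_nervePath {L : Type u} [PartialOrder L] (f : K →o L) {o a : K} (h : o ≤ a) :
    map f (nervePath h) = nervePath (f.monotone h) := rfl

theorem map_conj {L : Type u} [PartialOrder L] (f : K →o L) {o a : K}
    (t : SPath K o a) (p : SPath K o o) :
    map f (conj t p) = conj (map f t) (map f p) := by
  show map f (t.reverse.comp (p.comp t)) = _
  rw [map_comp, map_comp, map_reverse]; rfl

end SPath

namespace WLoop

variable {K : Type u} [PartialOrder K]

theorem mk_mul {o : K} (p q : SPath K o o) : mk p * mk q = mk (q.comp p) := rfl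

/-- The isomorphism `λ_{ao} : Λ_o → Λ_a`. -/
def lamEquiv {o a : K} (h : o ≤ a) : WLoop K o ≃* WLoop K a where
  toFun := Quotient.map (SPath.conj (SPath.nervePath h))
    (fun _ _ hpq => SPath.conj_congr _ hpq)
  invFun := Quotient.map
    (fun q => (SPath.nervePath h).comp (q.comp (SPath.nervePath h).reverse))
    (fun _ _ hpq => SPath.WEquiv.comp_congr (SPath.WEquiv.refl _)
      (SPath.WEquiv.comp_congr hpq (SPath.WEquiv.refl _)))
  left_inv := by
    refine Quotient.ind (fun p => ?_)
    exact Quotient.sound (SPath.conj_left_inv _ p)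
  right_inv := by
    refine Quotient.ind (fun q => ?_)
    exact Quotient.sound (SPath.conj_right_inv _ q)
  map_mul' := by
    refine Quotient.ind₂ (fun p q => ?_)
    exact Quotient.sound (SPath.conj_mul _ p q)

theorem lamEquiv_mk {o a : K} (h : o ≤ a) (p : SPath K o o) :
    lamEquiv h (mk p) = mk (SPath.conj (SPath.nervePath h) p) := rfl

/-- The isomorphism `g_* : Λ_o → Λ_{go}`. -/
def smulEquiv {G : Type v} [Group G] [MulAction G K]
    (hord : ∀ (g : G) (a b : K), a ≤ b → g • a ≤ g • b) (g : G) (o : K) :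
    WLoop K o ≃* WLoop K (g • o) where
  toFun := Quotient.map (SPath.map (smulOrderHom hord g))
    (fun _ _ hpq => hpq.map _)
  invFun := Quotient.map
    (fun q => SPath.castP (inv_smul_smul g o) (inv_smul_smul g o)
      (SPath.map (smulOrderHom hord g⁻¹) q))
    (fun _ _ hpq => SPath.wequiv_castP _ _ (hpq.map _))
  left_inv := by
    refine Quotient.ind (fun p => ?_)
    refine congrArg (Quotient.mk _) ?_
    show SPath.castP (a := (smulOrderHom hord g⁻¹) ((smulOrderHom hord g) o))
      (b := (smulOrderHom hord g⁻¹) ((smulOrderHom hord g) o)) (show (smulOrderHom hord g⁻¹) ((smulOrderHom hord g) o) = o from inv_smul_smul g o)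
      (show (smulOrderHom hord g⁻¹) ((smulOrderHom hord g) o) = o from inv_smul_smul g o)
      (SPath.map (smulOrderHom hord g⁻¹) (SPath.map (smulOrderHom hord g) p)) = p
    rw [SPath.map_map_inv (smulOrderHom hord g) (smulOrderHom hord g⁻¹)
      (fun x => inv_smul_smul g x) p, SPath.castP_castP, SPath.castP_self]
  right_inv := by
    refine Quotient.ind (fun q => ?_)
    refine congrArg (Quotient.mk _) ?_
    show SPath.map (smulOrderHom hord g) (SPath.castP (a := (smulOrderHom hord g⁻¹) (g • o))
      (b := (smulOrderHom hord g⁻¹) (g • o)) (show (smulOrderHom hord g⁻¹) (g • o) = o from inv_smul_smul g o)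
      (show (smulOrderHom hord g⁻¹) (g • o) = o from inv_smul_smul g o)
      (SPath.map (smulOrderHom hord g⁻¹) q)) = q
    rw [SPath.map_castP, SPath.map_map_inv (smulOrderHom hord g⁻¹) (smulOrderHom hord g)
      (fun x => smul_inv_smul g x) q, SPath.castP_castP]
    exact SPath.castP_self _ _ q
  map_mul' := by
    refine Quotient.ind₂ (fun p q => ?_)
    exact congrArg (Quotient.mk _) (SPath.map_comp _ q p)

theorem smulEquiv_mk {G : Type v} [Group G] [MulAction G K]
    (hord : ∀ (g : G) (a b : K), a ≤ b → g • a ≤ g • b) (g : G) (o : K) (p : SPath K o o) :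
    smulEquiv hord g o (mk p) = mk (SPath.map (smulOrderHom hord g) p) := rfl

end WLoop


/-- (i) conjugation by the nerve 1-simplices gives well-defined group
isomorphisms `λ_{ao} : Λ_o → Λ_a` compatible with compositions of inclusions (so that
`(Λ, λ)_K` is a net bundle of discrete groups), mapping `Λ^l_o` into `Λ^l_a` (so that
`(Λ^l, λ)_K` is a net of discrete groups and the inclusions `i_o : Λ^l_o → Λ_o` form a
monomorphism of nets of groups); (ii) a symmetry group `G` of `K` acts by group
isomorphisms `g_* : Λ_o → Λ_{go}` compatibly with `λ` and preserving `Λ^l`, so that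
`i` is a monomorphism of `G`-covariant nets of groups. -/
theorem statement_0 {K : Type u} [PartialOrder K] (G : Type v) [Group G] [MulAction G K]
    (hord : ∀ (g : G) (a b : K), a ≤ b → g • a ≤ g • b) :
    ∃ lam : ∀ ⦃o a : K⦄, o ≤ a → (WLoop K o ≃* WLoop K a),
      -- definition of λ_{ao} on classes of loops
      (∀ ⦃o a : K⦄ (h : o ≤ a) (p : SPath K o o),
          lam h (WLoop.mk p)
            = WLoop.mk ((SPath.nervePath h).reverse.comp (p.comp (SPath.nervePath h)))) ∧
      -- net relations: λ_{ao} ∘ λ_{oe} = λ_{ae}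
      (∀ ⦃e o a : K⦄ (h1 : e ≤ o) (h2 : o ≤ a) (x : WLoop K e),
          lam h2 (lam h1 x) = lam (h1.trans h2) x) ∧
      -- λ_{ao} maps Λ^l_o (injectively) into Λ^l_a
      (∀ ⦃o a : K⦄ (h : o ≤ a) (x : WLoop K o), x ∈ WLoopLoc K o → lam h x ∈ WLoopLoc K a) ∧
      -- (ii) the G-action
      ∃ gact : ∀ (g : G) (o : K), WLoop K o ≃* WLoop K (g • o),
        (∀ (g : G) (o : K) (p : SPath K o o),
            gact g o (WLoop.mk p) = WLoop.mk (SPath.map (smulOrderHom hord g) p)) ∧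
        (∀ (g : G) ⦃o a : K⦄ (h : o ≤ a) (x : WLoop K o),
            gact g a (lam h x) = lam (hord g o a h) (gact g o x)) ∧
        (∀ (g : G) (o : K) (x : WLoop K o),
            x ∈ WLoopLoc K o → gact g o x ∈ WLoopLoc K (g • o)) := by
  refine ⟨fun o a h => WLoop.lamEquiv h, fun o a h p => rfl, ?_, ?_, ?_⟩
  · intro e o a h1 h2 x
    refine Quotient.inductionOn x (fun p => ?_)
    show WLoop.mk (SPath.conj (SPath.nervePath h2) (SPath.conj (SPath.nervePath h1) p)) = _
    rw [SPath.conj_conj]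
    exact Quotient.sound (SPath.conj_congr_t (SPath.nerve_comp h1 h2) p)
  · intro o a h x hx
    obtain ⟨p, hp, rfl⟩ := hx
    exact ⟨SPath.conj (SPath.nervePath h) p,
      SPath.SuppLE.comp (SPath.SuppLE.reverse (SPath.suppLE_nervePath h))
        (SPath.SuppLE.comp (hp.mono h) (SPath.suppLE_nervePath h)), rfl⟩
  · refine ⟨fun g o => WLoop.smulEquiv hord g o, fun g o p => rfl, ?_, ?_⟩
    · intro g o a h x
      refine Quotient.inductionOn x (fun p => ?_)
      show WLoop.mk (SPath.map (smulOrderHom hord g) (SPath.conj (SPath.nervePath h) p))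
        = WLoop.mk (SPath.conj (SPath.nervePath (hord g o a h))
            (SPath.map (smulOrderHom hord g) p))
      exact congrArg WLoop.mk (SPath.map_conj _ _ _)
    · intro g o x hx
      obtain ⟨p, hp, rfl⟩ := hx
      exact ⟨SPath.map (smulOrderHom hord g) p, SPath.SuppLE.map (smulOrderHom hord g) hp, rfl⟩

end AQFT
end
end

section
/- Let (A,j)_K be a C*-net bundle over a pathwise connected poset K, and set j_b := j_{|b|∂₀b}⁻¹ ∘ j_{|b|∂₁b} for every 1-simplex b and j_p := j_{b_n} ∘ ⋯ ∘ j_{b_1} for every path p = b_n * ⋯ * b_1. Then: (a) j_{∂₀c} ∘ j_{∂₂c} = j_{∂₁c} for every 2-simplex c; (b) j_p = j_q whenever p and q are homotopic paths with the same endpoints; (c) for every o ∈ K the map [p] ↦ j_p is a group homomorphism from π₁ᵒ(K) into the group of *-automorphisms of A_o. -/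
noncomputable section

universe u v w u' v' w' u'' v'' w''

namespace AQFT

namespace SPath

variable {K : Type u} [PartialOrder K]

/-! ### Homotopy of paths -/

inductive Homotopic : {a b : K} → SPath K a b → SPath K a b → Prop
  | refl {a b : K} (p : SPath K a b) : Homotopic p p
  | symm {a b : K} {p q : SPath K a b} : Homotopic p q → Homotopic q p
  | trans {a b : K} {p q r : SPath K a b} : Homotopic p q → Homotopic q r → Homotopic p r
  | comp_congr {a b c : K} {p p' : SPath K a b} {q q' : SPath K b c} :
      Homotopic p p' → Homotopic q q' → Homotopic (p.comp q) (p'.comp q')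
  | degen {a : K} (s : Simplex1 K) (h0 : s.d0 = a) (h1 : s.d1 = a) (hs : s.supp = a) :
      Homotopic (SPath.nil a) (single s h1 h0)
  | triangle {a b : K} (c : Simplex2 K) (h1 : c.d2.d1 = a) (h0 : c.d0.d0 = b) :
      Homotopic ((single c.d2 h1 rfl).comp (single c.d0 c.h10 h0))
        (single c.d1 (c.h11.trans h1) (c.h00.symm.trans h0))

theorem single_comp_op {a b : K} (s : Simplex1 K) (h1 : s.d1 = a) (h0 : s.d0 = b) :
    Homotopic ((single s h1 h0).comp (single s.op h0 h1)) (SPath.nil a) := by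
  subst h1; subst h0
  have ht := Homotopic.triangle
    (⟨s.supp, s.op, Simplex1.deg s.d1, s, le_rfl, s.le1, le_rfl, rfl, rfl, rfl⟩ : Simplex2 K)
    rfl rfl
  have hd := Homotopic.degen (K := K) (Simplex1.deg s.d1) rfl rfl rfl
  exact ht.trans hd.symm

theorem comp_reverse_self {a b : K} (p : SPath K a b) :
    Homotopic (p.comp p.reverse) (SPath.nil a) := by
  induction p with
  | nil => exact .refl _
  | cons p s h1 h0 ih =>
      show Homotopic ((p.comp (single s h1 h0)).comp ((single s.op h0 h1).comp p.reverse)) _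
      rw [comp_assoc, ← comp_assoc (single s h1 h0)]
      have h2 : Homotopic (((single s h1 h0).comp (single s.op h0 h1)).comp p.reverse)
          p.reverse := by
        have h3 := Homotopic.comp_congr (single_comp_op s h1 h0) (Homotopic.refl p.reverse)
        rwa [nil_comp] at h3
      exact (Homotopic.comp_congr (Homotopic.refl p) h2).trans ih

theorem reverse_comp_self {a b : K} (p : SPath K a b) :
    Homotopic (p.reverse.comp p) (SPath.nil b) := by
  induction p with
  | nil => exact .refl _
  | cons p s h1 h0 ih =>
      show Homotopic (((single s.op h0 h1).comp p.reverse).comp (p.comp (single s h1 h0))) _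
      rw [comp_assoc, ← comp_assoc p.reverse]
      have h2 : Homotopic ((p.reverse.comp p).comp (single s h1 h0)) (single s h1 h0) := by
        have h3 := Homotopic.comp_congr ih (Homotopic.refl (single s h1 h0))
        rwa [nil_comp] at h3
      have h4 : Homotopic ((single s.op h0 h1).comp ((p.reverse.comp p).comp (single s h1 h0)))
          ((single s.op h0 h1).comp (single s h1 h0)) :=
        Homotopic.comp_congr (Homotopic.refl _) h2
      exact h4.trans (single_comp_op s.op h0 h1)

theorem Homotopic.reverse_congr {a b : K} {p q : SPath K a b} (h : Homotopic p q) :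
    Homotopic p.reverse q.reverse := by
  have e1 : Homotopic p.reverse (p.reverse.comp (q.comp q.reverse)) :=
    Homotopic.comp_congr (Homotopic.refl p.reverse) (comp_reverse_self q).symm
  have e2 : Homotopic (p.reverse.comp (q.comp q.reverse)) ((p.reverse.comp p).comp q.reverse) := by
    rw [comp_assoc]
    exact Homotopic.comp_congr (Homotopic.refl _)
      (Homotopic.comp_congr h.symm (Homotopic.refl _))
  have e3 : Homotopic ((p.reverse.comp p).comp q.reverse) q.reverse := by
    have h3 := Homotopic.comp_congr (reverse_comp_self p) (Homotopic.refl q.reverse)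
    rwa [nil_comp] at h3
  exact (e1.trans e2).trans e3

end SPath

/-! ### The fundamental group of a poset -/

instance homotopySetoid (K : Type u) [PartialOrder K] (o : K) : Setoid (SPath K o o) where
  r := SPath.Homotopic
  iseqv := ⟨fun p => .refl p, fun h => h.symm, fun h h' => h.trans h'⟩

def Pi1 (K : Type u) [PartialOrder K] (o : K) : Type u := Quotient (homotopySetoid K o)

namespace Pi1

variable {K : Type u} [PartialOrder K] {o : K}

def mk (p : SPath K o o) : Pi1 K o := Quotient.mk _ p

instance : One (Pi1 K o) := ⟨mk (SPath.nil o)⟩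

instance : Mul (Pi1 K o) :=
  ⟨Quotient.map₂ (fun p q => q.comp p)
    (fun _ _ hp _ _ hq => SPath.Homotopic.comp_congr hq hp)⟩

instance : Inv (Pi1 K o) :=
  ⟨Quotient.map SPath.reverse (fun _ _ h => h.reverse_congr)⟩

instance : Group (Pi1 K o) where
  mul_assoc x y z := by
    refine Quotient.inductionOn₃ x y z ?_
    intro p q r
    show mk (r.comp (q.comp p)) = mk ((r.comp q).comp p)
    rw [SPath.comp_assoc]
  one_mul x := Quotient.inductionOn x fun p => rfl
  mul_one x := Quotient.inductionOn x fun p => congrArg mk (SPath.nil_comp p)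
  inv_mul_cancel x := Quotient.inductionOn x fun p => Quotient.sound (SPath.comp_reverse_self p)

end Pi1

/-! ### Nets of C*-algebras over a poset -/

open scoped ComplexOrder

variable {K : Type u} [PartialOrder K]

structure CStarNet (K : Type u) [PartialOrder K] where
  fib : K → Type v
  [cstar : ∀ o, CStarAlgebra (fib o)]
  incl : ∀ ⦃a o : K⦄, a ≤ o → (fib a →⋆ₐ[ℂ] fib o)
  incl_injective : ∀ ⦃a o : K⦄ (h : a ≤ o), Function.Injective (incl h)
  incl_comp : ∀ ⦃e a o : K⦄ (h1 : e ≤ a) (h2 : a ≤ o) (x : fib e),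
      incl h2 (incl h1 x) = incl (h1.trans h2) x

attribute [instance] CStarNet.cstar

/-- A C*-net bundle: all the inclusion maps are isomorphisms. -/
def IsCStarNetBundle (N : CStarNet.{u, v} K) : Prop :=
  ∀ ⦃a o : K⦄ (h : a ≤ o), Function.Bijective (N.incl h)

/-- Morphisms of nets over (possibly) different posets, over the poset map `f`. -/
def IsNetMorphism {K : Type u} {S : Type u'} [PartialOrder K] [PartialOrder S]
    (N : CStarNet.{u, v} K) (M : CStarNet.{u', v'} S) (f : K →o S)
    (φ : ∀ o : K, N.fib o →⋆ₐ[ℂ] M.fib (f o)) : Prop :=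
  ∀ ⦃a o : K⦄ (h : a ≤ o) (x : N.fib a), φ o (N.incl h x) = M.incl (f.monotone h) (φ a x)

/-- Morphisms of nets over the same poset (over the identity of the poset). -/
def IsNetMorphismOver (N : CStarNet.{u, v} K) (M : CStarNet.{u, v'} K)
    (φ : ∀ o : K, N.fib o →⋆ₐ[ℂ] M.fib o) : Prop :=
  ∀ ⦃a o : K⦄ (h : a ≤ o) (x : N.fib a), φ o (N.incl h x) = M.incl h (φ a x)

namespace CStarNet

def fibCast (N : CStarNet.{u, v} K) {a b : K} (h : a = b) : N.fib a ≃⋆ₐ[ℂ] N.fib b := by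
  subst h; exact StarAlgEquiv.refl ℂ _

/-- The isomorphism determined by an inclusion map of a C*-net bundle. -/
def holEquiv (N : CStarNet.{u, v} K) (hN : IsCStarNetBundle N) ⦃a o : K⦄ (h : a ≤ o) :
    N.fib a ≃⋆ₐ[ℂ] N.fib o :=
  StarAlgEquiv.ofBijective (N.incl h) (hN h)

/-- The 1-cocycle `j_b` associated with a 1-simplex `b` of the poset. -/
def hol1 (N : CStarNet.{u, v} K) (hN : IsCStarNetBundle N) (s : Simplex1 K) :
    N.fib s.d1 ≃⋆ₐ[ℂ] N.fib s.d0 :=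
  (N.holEquiv hN s.le1).trans (N.holEquiv hN s.le0).symm

/-- The extension `j_p` of the 1-cocycle from 1-simplices to paths. -/
def holPath (N : CStarNet.{u, v} K) (hN : IsCStarNetBundle N) {a : K} :
    {b : K} → SPath K a b → (N.fib a ≃⋆ₐ[ℂ] N.fib b)
  | _, .nil _ => StarAlgEquiv.refl ℂ _
  | _, .cons p s h1 h0 =>
      (holPath N hN p).trans (((N.fibCast h1.symm).trans (N.hol1 hN s)).trans (N.fibCast h0))

end CStarNet

/-- A net is trivial if it is isomorphic to a constant net bundle. -/
def IsTrivialNet (N : CStarNet.{u, v} K) : Prop :=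
  ∀ o₀ : K, ∃ τ : ∀ a, N.fib a ≃⋆ₐ[ℂ] N.fib o₀,
    ∀ ⦃a o : K⦄ (h : a ≤ o) (x : N.fib a), τ o (N.incl h x) = τ a x

/-- `(NB, ε)` is an enveloping net bundle of the net `N`. -/
def IsEnvelope (N : CStarNet.{u, v} K) (NB : CStarNet.{u, max u v} K)
    (ε : ∀ o, N.fib o →⋆ₐ[ℂ] NB.fib o) : Prop :=
  IsCStarNetBundle NB ∧ IsNetMorphismOver N NB ε ∧
    ∀ (M : CStarNet.{u, max u v} K), IsCStarNetBundle M →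
      ∀ ψ : ∀ o, N.fib o →⋆ₐ[ℂ] M.fib o, IsNetMorphismOver N M ψ →
        ∃! ψu : ∀ o, NB.fib o →⋆ₐ[ℂ] M.fib o,
          IsNetMorphismOver NB M ψu ∧ ∀ o x, ψu o (ε o x) = ψ o x

/-- The net `N` is nondegenerate w.r.t. the enveloping net bundle `NB`. -/
def IsNondegenerate (NB : CStarNet.{u, v'} K) : Prop :=
  ∀ o : K, Nontrivial (NB.fib o)

/-! ### States -/

/-- A state on a unital C*-algebra. -/
structure CStarAlgState (A : Type v) [CStarAlgebra A] where
  lin : A →ₗ[ℂ] ℂ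
  map_one : lin 1 = 1
  pos : ∀ a : A, 0 ≤ lin (star a * a)

/-- A state on a net of C*-algebras. -/
structure NetState (N : CStarNet.{u, v} K) where
  st : ∀ o, CStarAlgState (N.fib o)
  compat : ∀ ⦃o a : K⦄ (h : o ≤ a) (x : N.fib o), (st a).lin (N.incl h x) = (st o).lin x

/-! ### Representations -/

structure NetRep (N : CStarNet.{u, v} K) where
  H : K → Type w
  [nacg : ∀ o, NormedAddCommGroup (H o)]
  [ips : ∀ o, InnerProductSpace ℂ (H o)]
  [cpl : ∀ o, CompleteSpace (H o)]
  rep : ∀ o, N.fib o →⋆ₐ[ℂ] (H o →L[ℂ] H o)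
  U : ∀ ⦃o a : K⦄, o ≤ a → (H o ≃ₗᵢ[ℂ] H a)
  intertwine : ∀ ⦃o a : K⦄ (h : o ≤ a) (x : N.fib o) (v : H o),
      U h (rep o x v) = rep a (N.incl h x) (U h v)
  U_comp : ∀ ⦃o a e : K⦄ (h1 : o ≤ a) (h2 : a ≤ e) (v : H o),
      U h2 (U h1 v) = U (h1.trans h2) v

attribute [instance] NetRep.nacg NetRep.ips NetRep.cpl

namespace NetRep

variable {N : CStarNet.{u, v} K}

def hCast (R : NetRep.{u, v, w} N) {a b : K} (h : a = b) : R.H a ≃ₗᵢ[ℂ] R.H b := by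
  subst h; exact LinearIsometryEquiv.refl ℂ _

/-- The unitary `U_b` associated with a 1-simplex `b`. -/
def U1 (R : NetRep.{u, v, w} N) (s : Simplex1 K) : R.H s.d1 ≃ₗᵢ[ℂ] R.H s.d0 :=
  (R.U s.le1).trans (R.U s.le0).symm

/-- The unitary `U_p` associated with a path `p`. -/
def Upath (R : NetRep.{u, v, w} N) {a : K} : {b : K} → SPath K a b → (R.H a ≃ₗᵢ[ℂ] R.H b)
  | _, .nil _ => LinearIsometryEquiv.refl ℂ _
  | _, .cons p s h1 h0 =>
      (Upath R p).trans (((R.hCast h1.symm).trans (R.U1 s)).trans (R.hCast h0))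

/-- A representation is faithful if all the `π_o` are injective. -/
def Faithful (R : NetRep.{u, v, w} N) : Prop := ∀ o, Function.Injective (R.rep o)

/-- A representation vanishes if all the `π_o` are zero. -/
def Vanishes (R : NetRep.{u, v, w} N) : Prop := ∀ (o) (x : N.fib o), R.rep o x = 0

/-- Quasi (topologically) trivial representation: the loop unitaries commute with the
representation of the corresponding fibre. -/
def QuasiTrivial (R : NetRep.{u, v, w} N) : Prop :=
  ∀ (o : K) (p : SPath K o o) (x : N.fib o) (v : R.H o),
    R.Upath p (R.rep o x v) = R.rep o x (R.Upath p v)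

/-- Unitary equivalence of representations. -/
def Equiv (R : NetRep.{u, v, w} N) (R' : NetRep.{u, v, w'} N) : Prop :=
  ∃ T : ∀ o, R.H o ≃ₗᵢ[ℂ] R'.H o,
    (∀ (o) (x : N.fib o) (v : R.H o), T o (R.rep o x v) = R'.rep o x (T o v)) ∧
    (∀ ⦃o a : K⦄ (h : o ≤ a) (v : R.H o), T a (R.U h v) = R'.U h (T o v))

end NetRep

/-- The representation of `N` obtained by composing a representation of `NB` with
a morphism `ε : N → NB` of nets over `K`. -/
def NetRep.ofEnvelope {N : CStarNet.{u, v} K} {NB : CStarNet.{u, v'} K}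
    (ε : ∀ o, N.fib o →⋆ₐ[ℂ] NB.fib o) (hε : IsNetMorphismOver N NB ε)
    (R : NetRep.{u, v', w} NB) : NetRep.{u, v, w} N where
  H := R.H
  rep o := (R.rep o).comp (ε o)
  U := R.U
  intertwine := by
    intro o a h x v
    show R.U h (R.rep o (ε o x) v) = R.rep a (ε a (N.incl h x)) (R.U h v)
    rw [hε h x]
    exact R.intertwine h (ε o x) v
  U_comp := R.U_comp

/-- Covariant representations of the holonomy dynamical system of a C*-net bundle,
with the action of the fundamental group presented at the level of loops. -/
structure CovRep (N : CStarNet.{u, v} K) (hN : IsCStarNetBundle N) (o : K) where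
  H : Type w
  [nacg : NormedAddCommGroup H]
  [ips : InnerProductSpace ℂ H]
  [cpl : CompleteSpace H]
  eta : N.fib o →⋆ₐ[ℂ] (H →L[ℂ] H)
  V : SPath K o o → (H ≃ₗᵢ[ℂ] H)
  V_hom : ∀ p q : SPath K o o, SPath.Homotopic p q → V p = V q
  V_mul : ∀ p q : SPath K o o, V (p.comp q) = (V p).trans (V q)
  cov : ∀ (p : SPath K o o) (x : N.fib o) (v : H),
      eta (N.holPath hN p x) (V p v) = V p (eta x v)

attribute [instance] CovRep.nacg CovRep.ips CovRep.cpl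

/-- Equivalence of covariant representations. -/
def CovRep.Equiv {N : CStarNet.{u, v} K} {hN : IsCStarNetBundle N} {o : K}
    (C : CovRep.{u, v, w} N hN o) (C' : CovRep.{u, v, w'} N hN o) : Prop :=
  ∃ W : C.H ≃ₗᵢ[ℂ] C'.H,
    (∀ (x : N.fib o) (v : C.H), W (C.eta x v) = C'.eta x (W v)) ∧
    (∀ (p : SPath K o o) (v : C.H), W (C.V p v) = C'.V p (W v))

/-- A representation of a single C*-algebra on a Hilbert space. -/
structure AlgRep (A : Type v) [CStarAlgebra A] where
  H : Type w
  [nacg : NormedAddCommGroup H]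
  [ips : InnerProductSpace ℂ H]
  [cpl : CompleteSpace H]
  rho : A →⋆ₐ[ℂ] (H →L[ℂ] H)

attribute [instance] AlgRep.nacg AlgRep.ips AlgRep.cpl

/-- A Hilbert space representation (on a single Hilbert space) of the restriction of
a net of C*-algebras to a subset `P` of the poset. -/
structure SubNetHSRep (N : CStarNet.{u, v} K) (P : Set K) where
  H : Type w
  [nacg : NormedAddCommGroup H]
  [ips : InnerProductSpace ℂ H]
  [cpl : CompleteSpace H]
  rep : ∀ o ∈ P, N.fib o →⋆ₐ[ℂ] (H →L[ℂ] H)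
  compat : ∀ ⦃a o : K⦄ (ha : a ∈ P) (ho : o ∈ P) (h : a ≤ o) (x : N.fib a),
      rep o ho (N.incl h x) = rep a ha x

attribute [instance] SubNetHSRep.nacg SubNetHSRep.ips SubNetHSRep.cpl

/-! ### Amenability -/

/-- The space `ℓ∞(G)` of bounded real-valued functions on `G`. -/
def BddFuns (G : Type w) : Submodule ℝ (G → ℝ) where
  carrier := {f | ∃ C, ∀ g, |f g| ≤ C}
  add_mem' := by
    rintro f g ⟨C, hC⟩ ⟨D, hD⟩
    exact ⟨C + D, fun x => (abs_add_le _ _).trans (add_le_add (hC x) (hD x))⟩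
  zero_mem' := ⟨0, by simp⟩
  smul_mem' := by
    rintro c f ⟨C, hC⟩
    refine ⟨|c| * C, fun x => ?_⟩
    have : |c • f x| = |c| * |f x| := by simp [abs_mul]
    calc |(c • f) x| = |c| * |f x| := by simpa using this
      _ ≤ |c| * C := mul_le_mul_of_nonneg_left (hC x) (abs_nonneg c)

def BddFuns.const (G : Type w) (r : ℝ) : BddFuns G :=
  ⟨fun _ => r, ⟨|r|, fun _ => le_rfl⟩⟩

def BddFuns.rtrans {G : Type w} [Group G] (f : BddFuns G) (h : G) : BddFuns G :=
  ⟨fun g => (f : G → ℝ) (g * h), by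
    obtain ⟨C, hC⟩ := f.2
    exact ⟨C, fun g => hC (g * h)⟩⟩

/-- A right invariant mean on `ℓ∞(G)`. -/
structure RightInvariantMean (G : Type w) [Group G] where
  mean : BddFuns G →ₗ[ℝ] ℝ
  nonneg : ∀ f : BddFuns G, (∀ g, 0 ≤ (f : G → ℝ) g) → 0 ≤ mean f
  normalized : mean (BddFuns.const G 1) = 1
  rightInv : ∀ (f : BddFuns G) (h : G), mean (BddFuns.rtrans f h) = mean f

/-- Amenability of a (discrete) group. -/
def IsAmenable (G : Type w) [Group G] : Prop := Nonempty (RightInvariantMean G)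

/-! ### Covariant nets -/

/-- A `G`-covariant structure on a net of C*-algebras, where `G` acts on the poset `K`
by order preserving bijections. -/
structure CovariantNet {G : Type w} [Group G] [MulAction G K]
    (hord : ∀ (g : G) (a b : K), a ≤ b → g • a ≤ g • b) (N : CStarNet.{u, v} K) where
  act : ∀ (g : G) (o : K), N.fib o ≃⋆ₐ[ℂ] N.fib (g • o)
  act_mul : ∀ (g h : G) (o : K) (x : N.fib o),
      N.fibCast (mul_smul h g o) (act (h * g) o x) = act h (g • o) (act g o x)
  act_incl : ∀ (g : G) ⦃a o : K⦄ (hao : a ≤ o) (x : N.fib a),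
      act g o (N.incl hao x) = N.incl (hord g a o hao) (act g a x)

/-- A `G`-invariant state of a `G`-covariant net. -/
def NetState.Invariant {G : Type w} [Group G] [MulAction G K]
    {hord : ∀ (g : G) (a b : K), a ≤ b → g • a ≤ g • b} {N : CStarNet.{u, v} K}
    (α : CovariantNet hord N) (ω : NetState N) : Prop :=
  ∀ (g : G) (o : K) (x : N.fib o), (ω.st (g • o)).lin (α.act g o x) = (ω.st o).lin x

/-! ### The generalized Čech cocycle -/

/-- A 1-simplex of the simplicial set `Σ°_*(K)`: two vertices and a nonempty support
`F` lying below both of them. -/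
structure CechSimplex1 (K : Type u) [PartialOrder K] : Type u where
  F : Set K
  hne : F.Nonempty
  src : K
  tgt : K
  hsrc : ∀ a ∈ F, a ≤ src
  htgt : ∀ a ∈ F, a ≤ tgt

def CechSimplex1.swap (s : CechSimplex1 K) : CechSimplex1 K :=
  ⟨s.F, s.hne, s.tgt, s.src, s.htgt, s.hsrc⟩

/-- `A^F_o`: the C*-subalgebra of the fibre over `o` generated by the images of the
fibres over the elements of `F`. -/
def CStarNet.fibGen (N : CStarNet.{u, v} K) (F : Set K) (o : K) (hF : ∀ a ∈ F, a ≤ o) :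
    StarSubalgebra ℂ (N.fib o) :=
  (StarAlgebra.adjoin ℂ (⋃ a, ⋃ h : a ∈ F, Set.range (N.incl (hF a h)))).topologicalClosure

theorem CStarNet.mem_fibGen (N : CStarNet.{u, v} K) {F : Set K} {o : K}
    (hF : ∀ a ∈ F, a ≤ o) {a : K} (ha : a ∈ F) (x : N.fib a) :
    N.incl (hF a ha) x ∈ N.fibGen F o hF :=
  StarSubalgebra.le_topologicalClosure _
    (StarAlgebra.subset_adjoin ℂ _
      (Set.mem_iUnion.2 ⟨a, Set.mem_iUnion.2 ⟨ha, Set.mem_range_self x⟩⟩))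

/-- A generalized Čech cocycle of the net `N` defined over the collection `D` of
1-simplices of `Σ°_*(K)`. -/
structure CechCocycle (N : CStarNet.{u, v} K) (D : Set (CechSimplex1 K)) where
  zeta : ∀ s ∈ D, (N.fibGen s.F s.src s.hsrc ≃⋆ₐ[ℂ] N.fibGen s.F s.tgt s.htgt)
  compat : ∀ (s : CechSimplex1 K) (hs : s ∈ D) ⦃a : K⦄ (ha : a ∈ s.F) (x : N.fib a),
      (zeta s hs ⟨N.incl (s.hsrc a ha) x, N.mem_fibGen s.hsrc ha x⟩ : N.fib s.tgt)
        = N.incl (s.htgt a ha) x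

/-- The domain of the Čech cocycle of a net: the union of all the domains over which
a Čech cocycle of the net exists. -/
def CechDomain (N : CStarNet.{u, v} K) : Set (CechSimplex1 K) :=
  {s | ∃ D : Set (CechSimplex1 K), Nonempty (CechCocycle N D) ∧ s ∈ D}


/-- A representation of a C*-net bundle and a covariant representation of its holonomy
dynamical system correspond to each other. -/
def MatchesCov {N : CStarNet.{u, v} K} {hN : IsCStarNetBundle N} {o : K}
    (R : NetRep.{u, v, w} N) (C : CovRep.{u, v, w'} N hN o) : Prop :=
  ∃ W : R.H o ≃ₗᵢ[ℂ] C.H,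
    (∀ (x : N.fib o) (v : R.H o), W (R.rep o x v) = C.eta x (W v)) ∧
    (∀ (p : SPath K o o) (v : R.H o), W (R.Upath p v) = C.V p (W v))


section Aux

variable {K : Type u} [PartialOrder K]
variable (N : CStarNet.{u, v} K) (hN : IsCStarNetBundle N)

theorem incl_hol1 (s : Simplex1 K) (x : N.fib s.d1) :
    N.incl s.le0 (N.hol1 hN s x) = N.incl s.le1 x := by
  show N.incl s.le0 ((N.holEquiv hN s.le0).symm ((N.holEquiv hN s.le1) x)) = _
  have h1 : ∀ y, N.incl s.le0 ((N.holEquiv hN s.le0).symm y) = y := fun y =>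
    (N.holEquiv hN s.le0).apply_symm_apply y
  rw [h1]
  rfl

theorem holPath_single (a b : K) (s : Simplex1 K) (h1 : s.d1 = a) (h0 : s.d0 = b)
    (x : N.fib a) :
    N.holPath hN (SPath.single s h1 h0) x
      = N.fibCast h0 (N.hol1 hN s (N.fibCast h1.symm x)) := rfl

theorem incl_hol1' (sp d0 d1 : K) (l0 : d0 ≤ sp) (l1 : d1 ≤ sp) (x : N.fib d1) :
    N.incl l0 (N.hol1 hN ⟨sp, d0, d1, l0, l1⟩ x) = N.incl l1 x :=
  incl_hol1 N hN ⟨sp, d0, d1, l0, l1⟩ x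

theorem hol_triangle (c : Simplex2 K) :
    N.holPath hN ((SPath.single c.d2 rfl rfl).comp (SPath.single c.d0 c.h10 rfl))
      = N.holPath hN (SPath.single c.d1 c.h11 c.h00.symm) := by
  obtain ⟨o, ⟨s0, v00, v01, l00, l01⟩, ⟨s1, v10, v11, l10, l11⟩,
    ⟨s2, v20, v21, l20, l21⟩, le0, le1, le2, h00, h11, h10⟩ := c
  dsimp only at h00 h11 h10
  subst h00; subst h11; subst h10
  apply DFunLike.ext
  intro x
  apply (hN (l00.trans le0)).injective
  show N.incl _ (N.hol1 hN ⟨s0, v00, v01, l00, l01⟩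
      (N.hol1 hN ⟨s2, v01, v11, l20, l21⟩ x)) = N.incl _ (N.hol1 hN ⟨s1, v00, v11, l10, l11⟩ x)
  rw [← N.incl_comp l00 le0, incl_hol1' N hN s0 v00 v01 l00 l01, N.incl_comp l01 le0,
    ← N.incl_comp l20 le2, incl_hol1' N hN s2 v01 v11 l20 l21, N.incl_comp l21 le2,
    ← N.incl_comp l10 le1, incl_hol1' N hN s1 v00 v11 l10 l11, N.incl_comp l11 le1]

theorem holPath_comp {a b c : K} (p : SPath K a b) (q : SPath K b c) :
    N.holPath hN (p.comp q) = (N.holPath hN p).trans (N.holPath hN q) := by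
  induction q with
  | nil => apply DFunLike.ext; intro x; rfl
  | cons q s h1 h0 ih =>
      show (N.holPath hN (p.comp q)).trans _ = _
      rw [ih]
      apply DFunLike.ext; intro x; rfl

theorem holPath_homotopic {a b : K} (p q : SPath K a b) (h : SPath.Homotopic p q) :
    N.holPath hN p = N.holPath hN q := by
  induction h with
  | refl => rfl
  | symm _ ih => exact ih.symm
  | trans _ _ ih1 ih2 => exact ih1.trans ih2
  | comp_congr _ _ ih1 ih2 => rw [holPath_comp, holPath_comp, ih1, ih2]
  | degen s h0 h1 hs =>
      obtain ⟨sp, d0, d1, le0, le1⟩ := s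
      dsimp only at h0 h1 hs
      subst h0; subst h1; subst hs
      apply DFunLike.ext; intro x
      show x = (N.holEquiv hN le0).symm ((N.holEquiv hN le1) x)
      have : le1 = le0 := rfl
      rw [this, (N.holEquiv hN le0).symm_apply_apply]
  | triangle c h1 h0 =>
      subst h1; subst h0
      exact hol_triangle N hN c

end Aux


/-- the 1-cocycle of a C*-net bundle satisfies the cocycle identity, is
homotopy invariant, and induces a group homomorphism from the fundamental group into
the group of *-automorphisms of the fibre. -/
theorem statement_1 {K : Type u} [PartialOrder K]
    (hconn : ∀ a b : K, Nonempty (SPath K a b))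
    (N : CStarNet.{u, v} K) (hN : IsCStarNetBundle N) :
    (∀ c : Simplex2 K,
        N.holPath hN ((SPath.single c.d2 rfl rfl).comp (SPath.single c.d0 c.h10 rfl))
          = N.holPath hN (SPath.single c.d1 c.h11 c.h00.symm)) ∧
    (∀ {a b : K} (p q : SPath K a b), SPath.Homotopic p q → N.holPath hN p = N.holPath hN q) ∧
    (∀ o : K, ∃ φ : Pi1 K o → (N.fib o ≃⋆ₐ[ℂ] N.fib o),
        (∀ p : SPath K o o, φ (Pi1.mk p) = N.holPath hN p) ∧
        (∀ (x y : Pi1 K o) (v : N.fib o), φ (x * y) v = φ x (φ y v))) := by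
  refine ⟨hol_triangle N hN, fun p q h => holPath_homotopic N hN p q h, fun o => ?_⟩
  refine ⟨Quotient.lift (fun p => N.holPath hN p)
    (fun p q h => holPath_homotopic N hN p q h), fun p => rfl, ?_⟩
  intro x y v
  refine Quotient.inductionOn₂ x y (fun p q => ?_)
  show N.holPath hN (q.comp p) v = _
  rw [holPath_comp]
  rfl

end AQFT
end
end

section
/- Let (A,j)_K be a net of C*-algebras over a simply connected poset K. Then the enveloping net bundle (Ā,j̄)_K of (A,j)_K is canonically isomorphic to the constant net bundle whose fibre is Fredenhagen's universal C*-algebra A^u of (A,j)_K. In particular, if K is upward directed, then A^u is isomorphic to the C*-inductive limit of (A,j)_K. -/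
noncomputable section

universe u v w u' v' w' u'' v'' w''

namespace AQFT

/-! ### Nets of C*-algebras over a poset -/

open scoped ComplexOrder

variable {K : Type u} [PartialOrder K]

namespace CStarNet

theorem incl_refl_apply (N : CStarNet.{u, v} K) {o : K} (h : o ≤ o) (x : N.fib o) :
    N.incl h x = x := by
  apply N.incl_injective h
  exact N.incl_comp h h x

@[simp] theorem fibCast_rfl_apply (N : CStarNet.{u, v} K) {a : K} (x : N.fib a) :
    N.fibCast rfl x = x := rfl

theorem holEquiv_apply (N : CStarNet.{u, v} K) (hN : IsCStarNetBundle N) {a o : K}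
    (h : a ≤ o) (x : N.fib a) : N.holEquiv hN h x = N.incl h x := rfl

theorem holEquiv_symm_eq (N : CStarNet.{u, v} K) (hN : IsCStarNetBundle N) {a o : K}
    (h : a ≤ o) {y : N.fib o} {z : N.fib a} (hz : N.incl h z = y) :
    (N.holEquiv hN h).symm y = z := by
  have h2 := (N.holEquiv hN h).symm_apply_apply z
  rwa [holEquiv_apply, hz] at h2

theorem incl_hol1 (N : CStarNet.{u, v} K) (hN : IsCStarNetBundle N) (s : Simplex1 K)
    (x : N.fib s.d1) : N.incl s.le0 (N.hol1 hN s x) = N.incl s.le1 x := by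
  show N.incl s.le0 ((N.holEquiv hN s.le0).symm (N.holEquiv hN s.le1 x)) = _
  exact (N.holEquiv hN s.le0).apply_symm_apply _

theorem holPath_comp (N : CStarNet.{u, v} K) (hN : IsCStarNetBundle N) {a b c : K}
    (p : SPath K a b) (q : SPath K b c) (x : N.fib a) :
    N.holPath hN (p.comp q) x = N.holPath hN q (N.holPath hN p x) := by
  induction q with
  | nil => rfl
  | cons q s h1 h0 ih =>
      show N.fibCast h0 _ = _
      rw [show (N.holPath hN (SPath.cons q s h1 h0)) (N.holPath hN p x)
        = N.fibCast h0 (((N.fibCast h1.symm).trans (N.hol1 hN s)) (N.holPath hN q (N.holPath hN p x))) from rfl, ← ih]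
      rfl

theorem holPath_homotopic (N : CStarNet.{u, v} K) (hN : IsCStarNetBundle N) {a b : K}
    {p q : SPath K a b} (h : SPath.Homotopic p q) (x : N.fib a) :
    N.holPath hN p x = N.holPath hN q x := by
  induction h with
  | refl p => rfl
  | symm _ ih => exact (ih x).symm
  | trans _ _ ih1 ih2 => exact (ih1 x).trans (ih2 x)
  | comp_congr _ _ ihp ihq => rw [holPath_comp, holPath_comp, ihp, ihq]
  | degen s h0 h1 hs =>
      obtain ⟨supp, d0, d1, le0, le1⟩ := s
      dsimp at h0 h1 hs
      subst h0 h1 hs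
      show x = N.fibCast rfl ((N.hol1 hN ⟨_,_,_,le0,le1⟩) (N.fibCast rfl x))
      rw [fibCast_rfl_apply, fibCast_rfl_apply]
      apply N.incl_injective le0
      exact ((N.incl_refl_apply le0 x).trans (N.incl_refl_apply le1 x).symm).trans
        (N.incl_hol1 hN ⟨_,_,_,le0,le1⟩ x).symm
  | triangle c h1 h0 =>
      obtain ⟨supp, d0, d1, d2, le0, le1, le2, h00, h11, h10⟩ := c
      obtain ⟨s0, v0, w0, k0, l0⟩ := d0
      obtain ⟨s1, v1, w1, k1, l1⟩ := d1
      obtain ⟨s2, v2, w2, k2, l2⟩ := d2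
      dsimp only at h1 h0 h00 h11 h10 le0 le1 le2
      subst h00 h11 h10 h1 h0
      show N.fibCast rfl ((N.hol1 hN ⟨s0,_,_,k0,l0⟩) (N.fibCast rfl
          (N.fibCast rfl ((N.hol1 hN ⟨s2,_,_,k2,l2⟩) (N.fibCast rfl x)))))
        = N.fibCast rfl ((N.hol1 hN ⟨s1,_,_,k1,l1⟩) (N.fibCast rfl x))
      simp only [fibCast_rfl_apply]
      set z := (N.hol1 hN ⟨s2,_,_,k2,l2⟩) x with hz
      apply N.incl_injective (k0.trans le0)
      calc N.incl (k0.trans le0) ((N.hol1 hN ⟨s0,_,_,k0,l0⟩) z)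
          = N.incl le0 (N.incl k0 ((N.hol1 hN ⟨s0,_,_,k0,l0⟩) z)) :=
            (N.incl_comp k0 le0 _).symm
        _ = N.incl le0 (N.incl l0 z) := congrArg _ (N.incl_hol1 hN ⟨s0,_,_,k0,l0⟩ z)
        _ = N.incl le2 (N.incl k2 z) := N.incl_comp l0 le0 z |>.trans
            (N.incl_comp k2 le2 z).symm
        _ = N.incl le2 (N.incl l2 x) := congrArg _ (N.incl_hol1 hN ⟨s2,_,_,k2,l2⟩ x)
        _ = N.incl le1 (N.incl l1 x) := (N.incl_comp l2 le2 x).trans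
            (N.incl_comp l1 le1 x).symm
        _ = N.incl le1 (N.incl k1 ((N.hol1 hN ⟨s1,_,_,k1,l1⟩) x)) :=
            (congrArg _ (N.incl_hol1 hN ⟨s1,_,_,k1,l1⟩ x)).symm
        _ = N.incl (k0.trans le0) ((N.hol1 hN ⟨s1,_,_,k1,l1⟩) x) :=
            N.incl_comp k1 le1 _

end CStarNet

theorem SPath.allHomotopic {K : Type u} [PartialOrder K]
    (hsc : ∀ (o : K) (p : SPath K o o), SPath.Homotopic p (SPath.nil o))
    {a b : K} (p q : SPath K a b) : SPath.Homotopic p q := by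
  have h1 : SPath.Homotopic p (p.comp (q.reverse.comp q)) :=
    (Homotopic.comp_congr (Homotopic.refl p) (reverse_comp_self q).symm)
  have h2 : p.comp (q.reverse.comp q) = (p.comp q.reverse).comp q := (comp_assoc _ _ _).symm
  have h3 : SPath.Homotopic ((p.comp q.reverse).comp q) ((SPath.nil a).comp q) :=
    Homotopic.comp_congr (hsc a (p.comp q.reverse)) (Homotopic.refl q)
  rw [nil_comp] at h3
  exact (h1.trans (h2 ▸ Homotopic.refl _)).trans h3

theorem CStarNet.holPath_nervePath (N : CStarNet.{u, v} K) (hN : IsCStarNetBundle N)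
    {o a : K} (h : o ≤ a) (x : N.fib o) :
    N.holPath hN (SPath.nervePath h) x = N.incl h x := by
  show N.fibCast rfl ((N.hol1 hN ⟨a, a, o, le_rfl, h⟩) (N.fibCast rfl x)) = _
  rw [fibCast_rfl_apply, fibCast_rfl_apply]
  apply N.incl_injective (le_refl a)
  exact (N.incl_hol1 hN ⟨a, a, o, le_rfl, h⟩ x).trans (N.incl_refl_apply le_rfl _).symm

theorem hom_holPath {NB : CStarNet.{u, v'} K} (hNB : IsCStarNetBundle NB)
    {B : Type w''} [CStarAlgebra B] (φ : ∀ o, NB.fib o →⋆ₐ[ℂ] B)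
    (hφ : ∀ ⦃a o : K⦄ (h : a ≤ o) (y : NB.fib a), φ o (NB.incl h y) = φ a y)
    {a b : K} (p : SPath K a b) (x : NB.fib a) :
    φ b (NB.holPath hNB p x) = φ a x := by
  induction p with
  | nil => rfl
  | cons p s h1 h0 ih =>
      obtain ⟨supp, d0, d1, le0, le1⟩ := s
      dsimp only at h1 h0
      subst h1 h0
      show φ _ (NB.fibCast rfl ((NB.hol1 hNB ⟨_,_,_,le0,le1⟩)
        (NB.fibCast rfl (NB.holPath hNB p x)))) = _
      rw [CStarNet.fibCast_rfl_apply, CStarNet.fibCast_rfl_apply]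
      set z := NB.holPath hNB p x with hzdef
      have h3 := hφ le0 ((NB.hol1 hNB ⟨_,_,_,le0,le1⟩) z)
      rw [NB.incl_hol1 hNB ⟨_,_,_,le0,le1⟩ z, hφ le1 z] at h3
      rw [← h3]
      exact ih

set_option maxHeartbeats 1000000 in
theorem statement_5_aux {K : Type u} [PartialOrder K]
    (hconn : ∀ a b : K, Nonempty (SPath K a b))
    (hsc : ∀ (o : K) (p : SPath K o o), SPath.Homotopic p (SPath.nil o))
    (N : CStarNet.{u, v} K)
    (Au : Type (max u v)) [CStarAlgebra Au] (ψ : ∀ o, N.fib o →⋆ₐ[ℂ] Au)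
    (hψ : ∀ ⦃o o' : K⦄ (h : o ≤ o') (x : N.fib o), ψ o' (N.incl h x) = ψ o x)
    (hAu : ∀ (B : Type (max u v)) [CStarAlgebra B] (χ : ∀ o, N.fib o →⋆ₐ[ℂ] B),
      (∀ ⦃o o' : K⦄ (h : o ≤ o') (x : N.fib o), χ o' (N.incl h x) = χ o x) →
      ∃! ρ : Au →⋆ₐ[ℂ] B, ∀ o x, ρ (ψ o x) = χ o x)
    (NB : CStarNet.{u, max u v} K) (ε : ∀ o, N.fib o →⋆ₐ[ℂ] NB.fib o)
    (henv : IsEnvelope N NB ε) :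
    (∃ ρ : ∀ o, NB.fib o ≃⋆ₐ[ℂ] Au,
       (∀ ⦃a o : K⦄ (h : a ≤ o) (x : NB.fib a), ρ o (NB.incl h x) = ρ a x) ∧
       (∀ (o : K) (x : N.fib o), ρ o (ε o x) = ψ o x)) ∧
    ((∀ a b : K, ∃ c, a ≤ c ∧ b ≤ c) →
      ∀ (L : Type (max u v)) [CStarAlgebra L] (χ : ∀ o, N.fib o →⋆ₐ[ℂ] L),
        (∀ ⦃o o' : K⦄ (h : o ≤ o') (x : N.fib o), χ o' (N.incl h x) = χ o x) →
        (∀ (B : Type (max u v)) [CStarAlgebra B] (χ' : ∀ o, N.fib o →⋆ₐ[ℂ] B),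
          (∀ ⦃o o' : K⦄ (h : o ≤ o') (x : N.fib o), χ' o' (N.incl h x) = χ' o x) →
          ∃! ρ : L →⋆ₐ[ℂ] B, ∀ o x, ρ (χ o x) = χ' o x) →
        ∃ e : Au ≃⋆ₐ[ℂ] L, ∀ o x, e (ψ o x) = χ o x) := by
  classical
  obtain ⟨hNB, hε, huniv⟩ := henv
  obtain ⟨ψu, ⟨hψu_mor, hψu_eps⟩, hψu_uniq⟩ := huniv
    { fib := fun _ => Au
      cstar := fun _ => inferInstance
      incl := fun _ _ _ => StarAlgHom.id ℂ Au
      incl_injective := fun _ _ _ => Function.injective_id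
      incl_comp := fun _ _ _ _ _ _ => rfl }
    (fun _ _ _ => Function.bijective_id) ψ (fun a o h x => hψ h x)
  have hψu_mor' : ∀ ⦃a o : K⦄ (h : a ≤ o) (y : NB.fib a), ψu o (NB.incl h y) = ψu a y :=
    fun a o h y => hψu_mor h y
  have pth : ∀ a b : K, SPath K a b := fun a b => (hconn a b).some
  have holeq : ∀ {a b : K} (p q : SPath K a b) (y : NB.fib a),
      NB.holPath hNB p y = NB.holPath hNB q y :=
    fun p q y => NB.holPath_homotopic hNB (SPath.allHomotopic hsc p q) y
  have hR : ∀ o : K, ∃! ρ : Au →⋆ₐ[ℂ] NB.fib o,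
      ∀ a x, ρ (ψ a x) = NB.holPath hNB (pth a o) (ε a x) := by
    intro o
    exact hAu (NB.fib o)
      (fun a => ((NB.holPath hNB (pth a o) : NB.fib a →⋆ₐ[ℂ] NB.fib o)).comp (ε a))
      (by intro e e' h x
          show NB.holPath hNB (pth e' o) (ε e' (N.incl h x))
            = NB.holPath hNB (pth e o) (ε e x)
          rw [hε h x, ← NB.holPath_nervePath hNB h (ε e x), ← NB.holPath_comp hNB]
          exact holeq _ _ _)
  choose ρ0 hρ0spec hρ0uniq using hR
  have hψu_hol : ∀ {a b : K} (p : SPath K a b) (y : NB.fib a),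
      ψu b (NB.holPath hNB p y) = ψu a y := fun p y => hom_holPath hNB ψu hψu_mor' p y
  have hright : ∀ (o : K) (u : Au), ψu o (ρ0 o u) = u := by
    intro o
    have h1 : ∀ a x, ((ψu o).comp (ρ0 o)) (ψ a x) = ψ a x := by
      intro a x
      show ψu o (ρ0 o (ψ a x)) = ψ a x
      rw [hρ0spec, hψu_hol, hψu_eps]
    obtain ⟨r, hr, hruniq⟩ := hAu Au ψ hψ
    have e1 := hruniq ((ψu o).comp (ρ0 o)) h1
    have e2 := hruniq (StarAlgHom.id ℂ Au) (fun a x => rfl)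
    intro u
    have := DFunLike.congr_fun (e1.trans e2.symm) u
    exact this
  have hρ0incl : ∀ ⦃a o : K⦄ (h : a ≤ o) (u : Au), NB.incl h (ρ0 a u) = ρ0 o u := by
    intro a o h u
    have hcand : ∀ e x, ((NB.incl h).comp (ρ0 a)) (ψ e x)
        = NB.holPath hNB (pth e o) (ε e x) := by
      intro e x
      show NB.incl h (ρ0 a (ψ e x)) = _
      rw [hρ0spec]
      rw [← NB.holPath_nervePath hNB h, ← NB.holPath_comp hNB]
      exact holeq _ _ _
    exact DFunLike.congr_fun (hρ0uniq o ((NB.incl h).comp (ρ0 a)) hcand) u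
  have hleft : ∀ (o : K) (y : NB.fib o), ρ0 o (ψu o y) = y := by
    obtain ⟨idc, hidc, hidcuniq⟩ := huniv NB hNB ε hε
    have hΦ : IsNetMorphismOver NB NB (fun o => (ρ0 o).comp (ψu o)) := by
      intro a o h y
      show ρ0 o (ψu o (NB.incl h y)) = NB.incl h (ρ0 a (ψu a y))
      rw [hψu_mor' h y, hρ0incl h]
    have hΦeps : ∀ o x, ((ρ0 o).comp (ψu o)) (ε o x) = ε o x := by
      intro o x
      show ρ0 o (ψu o (ε o x)) = ε o x
      rw [hψu_eps, hρ0spec, holeq (pth o o) (SPath.nil o) (ε o x)]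
      rfl
    have hid : IsNetMorphismOver NB NB (fun o => StarAlgHom.id ℂ (NB.fib o)) :=
      fun a o h y => rfl
    have e1 := hidcuniq _ ⟨hΦ, hΦeps⟩
    have e2 := hidcuniq _ ⟨hid, fun o x => rfl⟩
    intro o y
    exact DFunLike.congr_fun (congrFun (e1.trans e2.symm) o) y
  have hbij : ∀ o, Function.Bijective (ψu o) := fun o =>
    Function.bijective_iff_has_inverse.mpr ⟨ρ0 o, hleft o, hright o⟩
  constructor
  · exact ⟨fun o => StarAlgEquiv.ofBijective (ψu o) (hbij o),
      fun a o h x => hψu_mor' h x, fun o x => hψu_eps o x⟩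
  · intro _ L _ χL hχL hLuniv
    obtain ⟨f, hf, hfuniq⟩ := hAu L χL hχL
    obtain ⟨g, hg, hguniq⟩ := hLuniv Au ψ hψ
    obtain ⟨r, hr, hruniq⟩ := hAu Au ψ hψ
    have e1 : g.comp f = r := hruniq _ (fun o x => by
      show g (f (ψ o x)) = ψ o x; rw [hf, hg])
    have e2 : StarAlgHom.id ℂ Au = r := hruniq _ (fun o x => rfl)
    obtain ⟨r', hr', hr'uniq⟩ := hLuniv L χL hχL
    have e3 : f.comp g = r' := hr'uniq _ (fun o x => by
      show f (g (χL o x)) = χL o x; rw [hg, hf])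
    have e4 : StarAlgHom.id ℂ L = r' := hr'uniq _ (fun o x => rfl)
    have hbf : Function.Bijective f := Function.bijective_iff_has_inverse.mpr
      ⟨g, fun u => DFunLike.congr_fun (e1.trans e2.symm) u,
        fun v => DFunLike.congr_fun (e3.trans e4.symm) v⟩
    exact ⟨StarAlgEquiv.ofBijective f hbf, hf⟩

/-- over a simply connected poset, the enveloping net bundle of a net of
C*-algebras is canonically isomorphic to the constant net bundle whose fibre is
Fredenhagen's universal C*-algebra; in particular, if the poset is upward directed,
the universal C*-algebra is isomorphic to the C*-inductive limit of the net (i.e. to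
any C*-algebra with the corresponding universal colimit property). -/
theorem statement_5 {K : Type u} [PartialOrder K]
    (hconn : ∀ a b : K, Nonempty (SPath K a b))
    (hsc : ∀ (o : K) (p : SPath K o o), SPath.Homotopic p (SPath.nil o))
    (N : CStarNet.{u, v} K)
    -- Fredenhagen's universal C*-algebra of the net
    (Au : Type (max u v)) [CStarAlgebra Au] (ψ : ∀ o, N.fib o →⋆ₐ[ℂ] Au)
    (hψ : ∀ ⦃o o' : K⦄ (h : o ≤ o') (x : N.fib o), ψ o' (N.incl h x) = ψ o x)
    (hAu : ∀ (B : Type (max u v)) [CStarAlgebra B] (χ : ∀ o, N.fib o →⋆ₐ[ℂ] B),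
      (∀ ⦃o o' : K⦄ (h : o ≤ o') (x : N.fib o), χ o' (N.incl h x) = χ o x) →
      ∃! ρ : Au →⋆ₐ[ℂ] B, ∀ o x, ρ (ψ o x) = χ o x)
    -- the enveloping net bundle of the net
    (NB : CStarNet.{u, max u v} K) (ε : ∀ o, N.fib o →⋆ₐ[ℂ] NB.fib o)
    (henv : IsEnvelope N NB ε) :
    -- canonical isomorphism with the constant net bundle with fibre Au
    (∃ ρ : ∀ o, NB.fib o ≃⋆ₐ[ℂ] Au,
       (∀ ⦃a o : K⦄ (h : a ≤ o) (x : NB.fib a), ρ o (NB.incl h x) = ρ a x) ∧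
       (∀ (o : K) (x : N.fib o), ρ o (ε o x) = ψ o x)) ∧
    -- if K is upward directed, Au is isomorphic to the C*-inductive limit
    ((∀ a b : K, ∃ c, a ≤ c ∧ b ≤ c) →
      ∀ (L : Type (max u v)) [CStarAlgebra L] (χ : ∀ o, N.fib o →⋆ₐ[ℂ] L),
        (∀ ⦃o o' : K⦄ (h : o ≤ o') (x : N.fib o), χ o' (N.incl h x) = χ o x) →
        (∀ (B : Type (max u v)) [CStarAlgebra B] (χ' : ∀ o, N.fib o →⋆ₐ[ℂ] B),
          (∀ ⦃o o' : K⦄ (h : o ≤ o') (x : N.fib o), χ' o' (N.incl h x) = χ' o x) →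
          ∃! ρ : L →⋆ₐ[ℂ] B, ∀ o x, ρ (χ o x) = χ' o x) →
        ∃ e : Au ≃⋆ₐ[ℂ] L, ∀ o x, e (ψ o x) = χ o x) := by
  exact statement_5_aux hconn hsc N Au ψ hψ hAu NB ε henv

end AQFT
end
end
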